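/- Let n be a positive integer and m a natural number. The restriction map f ↦ (f(0), f(1), …, f(n−1)), from the set of ℤ-equivariant monotone maps of level (n, m) (monotone functions f : ℤ → ℤ with f(x + n) = f(x) + m for all x) to the set of monotone tuples y : Fin n → ℤ satisfying y(n−1) ≤ y(0) + m, is a bijection. -/

import Mathlib

/-- ℤ-equivariant monotone maps of level `(n, m)`: monotone functions `f : ℤ → ℤ`
with `f (x + n) = f x + m` for all `x : ℤ`. These model morphisms
`(1/n)ℤ → (1/m)ℤ` in the paracyclic category `Λ∞`. -/
def EquivariantMonotoneMap (n m : ℕ) : Type :=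
  {f : ℤ → ℤ // Monotone f ∧ ∀ x : ℤ, f (x + n) = f x + m}

/-- Monotone tuples `y : Fin n → ℤ` satisfying the wrap-around condition
`y (n-1) ≤ y 0 + m`. -/
def WrapMonotoneTuple (n m : ℕ) (hn : 0 < n) : Type :=
  {y : Fin n → ℤ //
    Monotone y ∧ y ⟨n - 1, Nat.sub_lt hn Nat.one_pos⟩ ≤ y ⟨0, hn⟩ + m}

/-- The restriction map `f ↦ (f 0, f 1, …, f (n-1))`. -/
def restrictEquivariant (n m : ℕ) (hn : 0 < n) :
    EquivariantMonotoneMap n m → WrapMonotoneTuple n m hn :=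
  fun f =>
    ⟨fun k => f.1 k.val, by
      constructor
      · intro k k' hk
        exact f.2.1 (Int.ofNat_le.mpr hk)
      · show f.1 ((n - 1 : ℕ) : ℤ) ≤ f.1 ((0 : ℕ) : ℤ) + m
        have h1 : f.1 ((0 : ℤ) + n) = f.1 0 + m := f.2.2 0
        have h2 : ((n - 1 : ℕ) : ℤ) ≤ (0 : ℤ) + (n : ℤ) := by omega
        have h3 := f.2.1 h2
        simp only [Nat.cast_zero]
        linarith⟩

/-- The restriction map from ℤ-equivariant monotone maps of level `(n, m)` to monotone
tuples satisfying the wrap-around condition is a bijection. -/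

lemma equivariant_shift (n m : ℕ) (f : EquivariantMonotoneMap n m) (x q : ℤ) :
    f.1 (x + n * q) = f.1 x + m * q := by
  induction q using Int.induction_on with
  | zero => simp
  | succ k ih =>
      have h := f.2.2 (x + n * k)
      push_cast at h ih ⊢
      rw [show x + (n:ℤ) * ((k:ℤ) + 1) = x + n * k + n by ring, h, ih]; ring
  | pred k ih =>
      have h := f.2.2 (x + n * (-(k:ℤ) - 1))
      have e : x + (n:ℤ) * (-(k:ℤ) - 1) + n = x + n * (-(k:ℤ)) := by ring
      rw [e] at h
      push_cast at h ih ⊢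
      linarith

theorem bijective_restrictEquivariant (n m : ℕ) (hn : 0 < n) :
    Function.Bijective (restrictEquivariant n m hn) := by
  have hnz : (n : ℤ) ≠ 0 := by exact_mod_cast hn.ne'
  have hnpos : (0:ℤ) < n := by exact_mod_cast hn
  have hlt : ∀ x : ℤ, (x % n).toNat < n := by
    intro x
    have := Int.emod_nonneg x hnz
    have := Int.emod_lt_of_pos x hnpos
    omega
  constructor
  · intro f g h
    have hfg : ∀ k : Fin n, f.1 k.val = g.1 k.val := fun k =>
      congrFun (congrArg Subtype.val h) k
    apply Subtype.ext; funext x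
    have hr0 : 0 ≤ x % n := Int.emod_nonneg x hnz
    have hx : x % n + n * (x / n) = x := Int.emod_add_mul_ediv x n
    have h1 := equivariant_shift n m f (x % n) (x / n)
    have h2 := equivariant_shift n m g (x % n) (x / n)
    have hk := hfg ⟨(x % n).toNat, hlt x⟩
    simp only at hk
    rw [show (((x % n).toNat : ℤ)) = x % n by omega] at hk
    rw [← hx, h1, h2, hk]
  · intro y
    refine ⟨⟨fun x => y.1 ⟨(x % n).toNat, hlt x⟩ + m * (x / n), ?_, ?_⟩, ?_⟩
    · apply monotone_int_of_le_succ
      intro x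
      have hr0 : 0 ≤ x % n := Int.emod_nonneg x hnz
      have hrn : x % n < n := Int.emod_lt_of_pos x hnpos
      have hq : x % n + n * (x / n) = x := Int.emod_add_mul_ediv x n
      have hq1 : (x+1) % n + n * ((x+1) / n) = x + 1 := Int.emod_add_mul_ediv (x+1) n
      by_cases hc : x % n = n - 1
      · have he : (x + 1) % n = 0 := by
          have hdvd : (n:ℤ) ∣ (x+1) := ⟨x/n + 1, by linarith⟩
          exact Int.emod_eq_zero_of_dvd hdvd
        have hd : (x + 1) / n = x / n + 1 := by
          rw [he] at hq1
          have : (n:ℤ) * ((x+1)/n) = n * (x/n + 1) := by linarith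
          exact mul_left_cancel₀ hnz this
        have e1 : (⟨(x % n).toNat, hlt x⟩ : Fin n)
            = ⟨n - 1, Nat.sub_lt hn Nat.one_pos⟩ := by
          apply Fin.ext; simp only; omega
        have e2 : (⟨((x+1) % n).toNat, hlt (x+1)⟩ : Fin n) = ⟨0, hn⟩ := by
          apply Fin.ext; simp only [he]; rfl
        rw [e1, e2, hd]
        have := y.2.2
        linarith
      · have he : (x + 1) % n = x % n + 1 := by
          have h1 : x + 1 = (x % n + 1) + n * (x / n) := by linarith
          rw [h1, Int.add_mul_emod_self_left, Int.emod_eq_of_lt (by omega) (by omega)]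
        have hd : (x + 1) / n = x / n := by
          rw [he] at hq1
          have : (n:ℤ) * ((x+1)/n) = n * (x/n) := by linarith
          exact mul_left_cancel₀ hnz this
        have hlt2 : (x % n).toNat + 1 < n := by omega
        have e2 : (⟨((x+1) % n).toNat, hlt (x+1)⟩ : Fin n)
            = ⟨(x % n).toNat + 1, hlt2⟩ := by
          apply Fin.ext; simp only [he]; omega
        have hm := y.2.1 (show (⟨(x % n).toNat, hlt x⟩ : Fin n)
            ≤ ⟨(x % n).toNat + 1, hlt2⟩ from by simp [Fin.le_def])
        rw [e2, hd]
        linarith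
    · intro x
      dsimp only
      have he : (x + n) % n = x % n := by
        rw [show x + (n:ℤ) = x + n * 1 by ring, Int.add_mul_emod_self_left]
      have hd : (x + n) / n = x / n + 1 := by
        rw [show x + (n:ℤ) = x + 1 * n by ring, Int.add_mul_ediv_right _ _ hnz]
      have e : (⟨((x+n) % n).toNat, hlt (x+n)⟩ : Fin n) = ⟨(x % n).toNat, hlt x⟩ := by
        apply Fin.ext; simp only [he]
      rw [e, hd]; ring
    · apply Subtype.ext
      funext k
      show y.1 ⟨((((k:ℕ):ℤ)) % n).toNat, _⟩ + m * (((k:ℕ):ℤ) / n) = y.1 k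
      have hk : ((k:ℕ):ℤ) % n = k :=
        Int.emod_eq_of_lt (by positivity) (by exact_mod_cast k.2)
      have hd : ((k:ℕ):ℤ) / n = 0 :=
        Int.ediv_eq_zero_of_lt (by positivity) (by exact_mod_cast k.2)
      have e : (⟨((((k:ℕ):ℤ)) % n).toNat, hlt _⟩ : Fin n) = k := by
        apply Fin.ext; simp only [hk]; simp
      rw [e, hd]; simp
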